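/- Let n ≥ 1, let M, K ∈ ℝ^{n×n} be skew-symmetric matrices, let S : ℝⁿ → ℝ be twice continuously differentiable, and let z : ℝ² → ℝⁿ be continuous. Suppose ζ¹, ζ² : ℝ² → ℝⁿ are continuously differentiable solutions of the variational (linearized) equation M ∂ₜζ(x,t) + K ∂ₓζ(x,t) = ∇²S(z(x,t)) ζ(x,t), where ∇²S denotes the (symmetric) Hessian matrix of S. Then the multi-symplectic conservation law ∂ₜ⟨M ζ¹(x,t), ζ²(x,t)⟩ + ∂ₓ⟨K ζ¹(x,t), ζ²(x,t)⟩ = 0 holds for all (x,t) ∈ ℝ². -/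

import Mathlib

open scoped RealInnerProductSpace
open Matrix

section Aux

variable {n : ℕ}

lemma inner_eq_dot (x y : EuclideanSpace ℝ (Fin n)) :
    ⟪x, y⟫ = dotProduct (x : Fin n → ℝ) (y : Fin n → ℝ) := by
  simp [PiLp.inner_apply, RCLike.inner_apply, dotProduct, mul_comm]

/-- Skew-symmetry transfer for the Euclidean inner product. -/
lemma skew_inner (A : Matrix (Fin n) (Fin n) ℝ) (hA : Aᵀ = -A)
    (u v : EuclideanSpace ℝ (Fin n)) :
    ⟪(show EuclideanSpace ℝ (Fin n) from WithLp.toLp 2 (A.mulVec u)), v⟫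
      = -⟪(show EuclideanSpace ℝ (Fin n) from WithLp.toLp 2 (A.mulVec v)), u⟫ := by
  rw [inner_eq_dot, inner_eq_dot]
  show (A *ᵥ u) ⬝ᵥ (v : Fin n → ℝ) = -((A *ᵥ v) ⬝ᵥ (u : Fin n → ℝ))
  rw [dotProduct_comm, Matrix.dotProduct_mulVec, ← Matrix.mulVec_transpose, hA,
    Matrix.neg_mulVec, neg_dotProduct]

/-- The inverse of the Riesz map `toDual`, as a continuous linear map over `ℝ`. -/
noncomputable def psi (n : ℕ) :
    StrongDual ℝ (EuclideanSpace ℝ (Fin n)) →L[ℝ] EuclideanSpace ℝ (Fin n) where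
  toFun y := (InnerProductSpace.toDual ℝ (EuclideanSpace ℝ (Fin n))).symm y
  map_add' a b := map_add _ a b
  map_smul' r a := by
    have := (InnerProductSpace.toDual ℝ (EuclideanSpace ℝ (Fin n))).symm.map_smulₛₗ r a
    simp only [LinearIsometryEquiv.map_smulₛₗ] at this ⊢
    simpa using this
  cont := (InnerProductSpace.toDual ℝ (EuclideanSpace ℝ (Fin n))).symm.continuous

lemma psi_inner (y : StrongDual ℝ (EuclideanSpace ℝ (Fin n)))
    (x : EuclideanSpace ℝ (Fin n)) : ⟪psi n y, x⟫ = y x :=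
  InnerProductSpace.toDual_symm_apply

/-- Transfer of `deriv` from the `PiLp 2` structure to the plain pi structure. -/
lemma deriv_pi_eq {f : ℝ → EuclideanSpace ℝ (Fin n)} {v : EuclideanSpace ℝ (Fin n)} {t : ℝ}
    (h : HasDerivAt f v t) :
    deriv (fun s => (f s : Fin n → ℝ)) t = (v : Fin n → ℝ) := by
  have h2 := ((PiLp.continuousLinearEquiv 2 ℝ (fun _ : Fin n => ℝ)) :
      EuclideanSpace ℝ (Fin n) →L[ℝ] (Fin n → ℝ)).hasFDerivAt.comp_hasDerivAt t h
  exact h2.deriv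

/-- Symmetry of the Hessian of a `C²` function, expressed via `gradient`. -/
lemma hess_symm (S : EuclideanSpace ℝ (Fin n) → ℝ) (hS : ContDiff ℝ 2 S)
    (w v₁ v₂ : EuclideanSpace ℝ (Fin n)) :
    ⟪fderiv ℝ (gradient S) w v₁, v₂⟫ = ⟪fderiv ℝ (gradient S) w v₂, v₁⟫ := by
  have hfd : DifferentiableAt ℝ (fderiv ℝ S) w :=
    ((hS.fderiv_right (m := 1) (by norm_num)).differentiable one_ne_zero).differentiableAt
  have hgrad_eq : gradient S = fun y => psi n (fderiv ℝ S y) := rfl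
  have hcomp : fderiv ℝ (gradient S) w = (psi n).comp (fderiv ℝ (fderiv ℝ S) w) := by
    rw [hgrad_eq]
    exact ((psi n).hasFDerivAt.comp w hfd.hasFDerivAt).fderiv
  have hsym : IsSymmSndFDerivAt ℝ S w := hS.contDiffAt.isSymmSndFDerivAt (by simp [minSmoothness_of_isRCLikeNormedField])
  rw [hcomp]
  simp only [ContinuousLinearMap.coe_comp', Function.comp_apply, psi_inner]
  exact hsym.eq v₁ v₂

end Aux

/-- **Multi-symplectic conservation law for Hamiltonian PDEs.**
If `ζ¹, ζ²` solve the variational equation `M ∂ₜζ + K ∂ₓζ = ∇²S(z) ζ` along a continuous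
function `z`, where `∇²S` is the Hessian (the derivative of the gradient) of a `C²` function
`S`, then `∂ₜ⟨M ζ¹, ζ²⟩ + ∂ₓ⟨K ζ¹, ζ²⟩ = 0`. -/
theorem stmt2 (n : ℕ) (hn : 1 ≤ n)
    (M K : Matrix (Fin n) (Fin n) ℝ)
    (hM : Mᵀ = -M) (hK : Kᵀ = -K)
    (S : EuclideanSpace ℝ (Fin n) → ℝ) (hS : ContDiff ℝ 2 S)
    (z : ℝ → ℝ → EuclideanSpace ℝ (Fin n))
    (hz : Continuous (Function.uncurry z))
    (ζ₁ ζ₂ : ℝ → ℝ → EuclideanSpace ℝ (Fin n))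
    (hζ₁smooth : ContDiff ℝ 1 (Function.uncurry ζ₁))
    (hζ₂smooth : ContDiff ℝ 1 (Function.uncurry ζ₂))
    (hζ₁ : ∀ x t : ℝ,
      (WithLp.toLp 2 (M.mulVec (deriv (fun s => ζ₁ x s) t)) : EuclideanSpace ℝ (Fin n))
        + (WithLp.toLp 2 (K.mulVec (deriv (fun y => ζ₁ y t) x)) : EuclideanSpace ℝ (Fin n))
        = fderiv ℝ (gradient S) (z x t) (ζ₁ x t))
    (hζ₂ : ∀ x t : ℝ,
      (WithLp.toLp 2 (M.mulVec (deriv (fun s => ζ₂ x s) t)) : EuclideanSpace ℝ (Fin n))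
        + (WithLp.toLp 2 (K.mulVec (deriv (fun y => ζ₂ y t) x)) : EuclideanSpace ℝ (Fin n))
        = fderiv ℝ (gradient S) (z x t) (ζ₂ x t)) :
    ∀ x t : ℝ,
      deriv (fun s => ⟪(show EuclideanSpace ℝ (Fin n) from WithLp.toLp 2 (M.mulVec (ζ₁ x s))), ζ₂ x s⟫) t
        + deriv (fun y => ⟪(show EuclideanSpace ℝ (Fin n) from WithLp.toLp 2 (K.mulVec (ζ₁ y t))), ζ₂ y t⟫) x = 0 := by
  intro x t
  classical
  -- the matrices as continuous linear maps
  let T : Matrix (Fin n) (Fin n) ℝ →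
      (EuclideanSpace ℝ (Fin n) →L[ℝ] EuclideanSpace ℝ (Fin n)) := fun A =>
    LinearMap.toContinuousLinearMap (Matrix.toEuclideanLin A)
  have hT : ∀ A : Matrix (Fin n) (Fin n) ℝ, ∀ v : EuclideanSpace ℝ (Fin n),
      T A v = (show EuclideanSpace ℝ (Fin n) from WithLp.toLp 2 (A.mulVec v)) := fun A v => rfl
  -- differentiability of the slices
  have hdiff : ∀ (ζ : ℝ → ℝ → EuclideanSpace ℝ (Fin n)), ContDiff ℝ 1 (Function.uncurry ζ) →
      (∀ a b : ℝ, HasDerivAt (fun s => ζ a s) (deriv (fun s => ζ a s) b) b ∧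
        HasDerivAt (fun y => ζ y b) (deriv (fun y => ζ y b) a) a) := by
    intro ζ hζ a b
    have hd := hζ.differentiable one_ne_zero
    constructor
    · exact ((hd.comp ((differentiable_const a).prodMk differentiable_id)).differentiableAt).hasDerivAt
    · exact ((hd.comp (differentiable_id.prodMk (differentiable_const b))).differentiableAt).hasDerivAt
  obtain ⟨h1t, h1x⟩ := hdiff ζ₁ hζ₁smooth x t
  obtain ⟨h2t, h2x⟩ := hdiff ζ₂ hζ₂smooth x t
  set a1 := deriv (fun s => ζ₁ x s) t with ha1
  set b1 := deriv (fun y => ζ₁ y t) x with hb1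
  set a2 := deriv (fun s => ζ₂ x s) t with ha2
  set b2 := deriv (fun y => ζ₂ y t) x with hb2
  -- compute the two derivatives
  have hMd : HasDerivAt (fun s => ⟪(show EuclideanSpace ℝ (Fin n) from WithLp.toLp 2 (M.mulVec (ζ₁ x s))), ζ₂ x s⟫)
      (⟪(show EuclideanSpace ℝ (Fin n) from WithLp.toLp 2 (M.mulVec (ζ₁ x t))), a2⟫
        + ⟪(show EuclideanSpace ℝ (Fin n) from WithLp.toLp 2 (M.mulVec a1)), ζ₂ x t⟫) t := by
    have hM1 : HasDerivAt (fun s => (show EuclideanSpace ℝ (Fin n) from WithLp.toLp 2 (M.mulVec (ζ₁ x s))))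
        (show EuclideanSpace ℝ (Fin n) from WithLp.toLp 2 (M.mulVec a1)) t := by
      simpa only [hT, Function.comp_def] using (T M).hasFDerivAt.comp_hasDerivAt t h1t
    exact hM1.inner ℝ h2t
  have hKd : HasDerivAt (fun y => ⟪(show EuclideanSpace ℝ (Fin n) from WithLp.toLp 2 (K.mulVec (ζ₁ y t))), ζ₂ y t⟫)
      (⟪(show EuclideanSpace ℝ (Fin n) from WithLp.toLp 2 (K.mulVec (ζ₁ x t))), b2⟫
        + ⟪(show EuclideanSpace ℝ (Fin n) from WithLp.toLp 2 (K.mulVec b1)), ζ₂ x t⟫) x := by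
    have hK1 : HasDerivAt (fun y => (show EuclideanSpace ℝ (Fin n) from WithLp.toLp 2 (K.mulVec (ζ₁ y t))))
        (show EuclideanSpace ℝ (Fin n) from WithLp.toLp 2 (K.mulVec b1)) x := by
      simpa only [hT, Function.comp_def] using (T K).hasFDerivAt.comp_hasDerivAt x h1x
    exact hK1.inner ℝ h2x
  rw [hMd.deriv, hKd.deriv]
  -- skew-symmetry
  rw [skew_inner M hM (ζ₁ x t) a2, skew_inner K hK (ζ₁ x t) b2]
  have key1 : ⟪(show EuclideanSpace ℝ (Fin n) from WithLp.toLp 2 (M.mulVec a1)), ζ₂ x t⟫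
        + ⟪(show EuclideanSpace ℝ (Fin n) from WithLp.toLp 2 (K.mulVec b1)), ζ₂ x t⟫
      = ⟪fderiv ℝ (gradient S) (z x t) (ζ₁ x t), ζ₂ x t⟫ := by
    have e1 : (show EuclideanSpace ℝ (Fin n) from WithLp.toLp 2 (M.mulVec a1))
        + (show EuclideanSpace ℝ (Fin n) from WithLp.toLp 2 (K.mulVec b1))
        = fderiv ℝ (gradient S) (z x t) (ζ₁ x t) := by
      have h1 := hζ₁ x t
      rw [deriv_pi_eq h1t, deriv_pi_eq h1x] at h1
      exact h1
    rw [← inner_add_left, e1]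
  have key2 : ⟪(show EuclideanSpace ℝ (Fin n) from WithLp.toLp 2 (M.mulVec a2)), ζ₁ x t⟫
        + ⟪(show EuclideanSpace ℝ (Fin n) from WithLp.toLp 2 (K.mulVec b2)), ζ₁ x t⟫
      = ⟪fderiv ℝ (gradient S) (z x t) (ζ₂ x t), ζ₁ x t⟫ := by
    have e2 : (show EuclideanSpace ℝ (Fin n) from WithLp.toLp 2 (M.mulVec a2))
        + (show EuclideanSpace ℝ (Fin n) from WithLp.toLp 2 (K.mulVec b2))
        = fderiv ℝ (gradient S) (z x t) (ζ₂ x t) := by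
      have h2 := hζ₂ x t
      rw [deriv_pi_eq h2t, deriv_pi_eq h2x] at h2
      exact h2
    rw [← inner_add_left, e2]
  have hsym := hess_symm S hS (z x t) (ζ₁ x t) (ζ₂ x t)
  linarith [key1, key2, hsym]
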